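/- arXiv:1308.0949 — 2 statements merged into one kernel-verified Lean document; each statement's English description precedes it below -/
import Mathlib

section
/- Let R be a commutative ring which, as a ℤ-module, is free with basis (b i)_{i ∈ ι}. Let i₀ ∈ ι, let u ∈ R, let k be a natural number with u * b i₀ = 2^k (i.e. 2^k times the identity of R), and let l be an integer. If there exists w ∈ R with u * w = l (i.e. l times the identity of R), then 2^k divides l in ℤ. -/
/-- Abstract mechanism of Corollary A.2: let `R` be a commutative ring which is
free as a `ℤ`-module with basis `b`, let `i₀` be a basis index, `u ∈ R`, and
`k : ℕ` with `u * b i₀ = 2^k` (as `2^k` times the identity of `R`). If some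
integer `l` (viewed in `R`) is divisible by `u`, then `2^k ∣ l` in `ℤ`. -/
theorem int_pow_two_dvd_of_mul_basis_eq {R : Type*} [CommRing R] {ι : Type*}
    (b : Module.Basis ι ℤ R) (i₀ : ι) (u : R) (k : ℕ)
    (hu : u * b i₀ = (2 : R) ^ k) (l : ℤ)
    (h : ∃ w : R, u * w = (l : R)) :
    (2 : ℤ) ^ k ∣ l := by
  obtain ⟨w, hw⟩ := h
  have key : ((2 : ℤ) ^ k) • w = l • b i₀ := by
    have h2 : (2 : R) ^ k * w = (l : R) * b i₀ := by
      rw [← hu, mul_comm u (b i₀), mul_assoc, hw, mul_comm]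
    rw [zsmul_eq_mul, zsmul_eq_mul]
    push_cast
    exact h2
  have h3 := congrArg (fun x => b.repr x i₀) key
  simp only [map_smul, Finsupp.smul_apply, b.repr_self, smul_eq_mul,
    Finsupp.single_eq_same, mul_one] at h3
  exact ⟨b.repr w i₀, h3.symm⟩
end

section
/- Let m ≥ 4 be an even natural number and let R be a commutative ring which, as a ℤ-module, is free with basis 1, L, L², …, L^(m−2), X (so m elements in total), and in which L^m = 0 and (2 + L)·X = 2^(m/2). If an integer l, regarded as l times the identity of R, is divisible by 2 + L in R, then 2^(m/2) divides l in ℤ. -/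
/-- Corollary A.2, even-dimensional case: let `m ≥ 4` be even and let `R` be a
commutative ring which is free as a `ℤ`-module with basis
`1, L, L², …, L^(m−2), X` (so `m` elements), in which `L^m = 0` and
`(2 + L) * X = 2^(m/2)`. If an integer `l` (viewed in `R`) is divisible by
`2 + L` in `R`, then `2^(m/2) ∣ l` in `ℤ`. -/
theorem quadric_division_even (m : ℕ) (hm : 4 ≤ m) (hme : Even m)
    {R : Type*} [CommRing R] (L X : R) (b : Module.Basis (Fin m) ℤ R)
    (hb : ∀ i : Fin m, b i = if (i : ℕ) = m - 1 then X else L ^ (i : ℕ))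
    (hL : L ^ m = 0) (hX : (2 + L) * X = (2 : R) ^ (m / 2)) (l : ℤ)
    (h : ∃ w : R, (2 + L) * w = (l : R)) :
    (2 : ℤ) ^ (m / 2) ∣ l := by
  obtain ⟨w, hw⟩ := h
  set N := m / 2 with hNdef
  have hmN : 2 * N = m := Nat.mul_div_cancel' hme.two_dvd
  have hm1 : m - 1 < m := by omega
  have hm2 : m - 2 < m := by omega
  have h0m : 0 < m := by omega
  -- basis values
  have hbL : ∀ (k : ℕ) (hk : k < m), k ≠ m - 1 → b ⟨k, hk⟩ = L ^ k := by
    intro k hk hk'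
    rw [hb]; simp [hk']
  have hbX : b ⟨m - 1, hm1⟩ = X := by rw [hb]; simp
  have hb0 : b ⟨0, h0m⟩ = (1 : R) := by
    rw [hbL 0 h0m (by omega)]; exact pow_zero L
  -- L * X
  have hLX : L * X = ((2:ℤ)^N) • b ⟨0, h0m⟩ - (2:ℤ) • b ⟨m-1, hm1⟩ := by
    rw [hb0, hbX, zsmul_eq_mul, zsmul_eq_mul]
    push_cast
    linear_combination hX
  -- coordinates of L^(m-1)
  set u : Fin m → ℤ := fun j => b.repr (L ^ (m - 1)) j with hu
  set c : ℤ := u ⟨m-2, hm2⟩ with hc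
  set v : ℤ := u ⟨m-1, hm1⟩ with hv
  have hrep : (L : R)^(m-1) = ∑ j : Fin m, u j • b j := (b.sum_repr _).symm
  have hLm : L * L^(m-1) = 0 := by
    have hmm : m - 1 + 1 = m := by omega
    rw [← pow_succ', hmm, hL]
  have hsum0 : ∑ j : Fin m, u j • (L * b j) = 0 := by
    rw [← hLm]
    conv_rhs => rw [hrep]
    rw [Finset.mul_sum]
    exact Finset.sum_congr rfl fun j _ => (mul_smul_comm _ _ _).symm
  have hcoord : ∀ k : Fin m, ∑ j : Fin m, u j * b.repr (L * b j) k = 0 := by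
    intro k
    have h1 := congrArg (b.coord k) hsum0
    rw [map_sum, map_zero] at h1
    have h2 : ∀ j : Fin m, b.coord k (u j • (L * b j)) = u j * b.repr (L * b j) k := by
      intro j
      rw [map_smul, smul_eq_mul, Module.Basis.coord_apply]
    rw [Finset.sum_congr rfl (fun j _ => h2 j)] at h1
    exact h1
  -- values of b.repr (L * b j)
  have hM1 : ∀ (j k : ℕ) (hj : j < m) (hk : k < m), j < m - 2 →
      b.repr (L * b ⟨j, hj⟩) ⟨k, hk⟩ = if k = j + 1 then 1 else 0 := by
    intro j k hj hk hj2
    rw [hbL j hj (by omega)]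
    have hstep : L * L ^ j = b ⟨j+1, by omega⟩ := by
      rw [hbL (j+1) (by omega) (by omega), ← pow_succ']
    rw [hstep, Module.Basis.repr_self_apply]
    by_cases hkj : k = j + 1
    · rw [if_pos hkj, if_pos (by simp [Fin.ext_iff, hkj])]
    · rw [if_neg hkj, if_neg (by simp [Fin.ext_iff]; omega)]
  have hM2 : ∀ k : Fin m, b.repr (L * b ⟨m-2, hm2⟩) k = u k := by
    intro k
    rw [hbL (m-2) hm2 (by omega)]
    have hstep : L * L ^ (m-2) = L ^ (m-1) := by
      rw [← pow_succ']
      congr 1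
      omega
    rw [hstep]
  have hM3 : ∀ (k : ℕ) (hk : k < m), b.repr (L * b ⟨m-1, hm1⟩) ⟨k, hk⟩ =
      (if k = 0 then (2:ℤ)^N else 0) - (if k = m-1 then 2 else 0) := by
    intro k hk
    rw [hbX, hLX, map_sub, map_smul, map_smul]
    rw [Finsupp.sub_apply, Finsupp.smul_apply, Finsupp.smul_apply,
      Module.Basis.repr_self_apply, Module.Basis.repr_self_apply, smul_eq_mul, smul_eq_mul]
    congr 1
    · by_cases hk0 : k = 0
      · rw [if_pos hk0, if_pos (by simp [Fin.ext_iff]; omega), mul_one]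
      · rw [if_neg hk0, if_neg (by simp [Fin.ext_iff]; omega), mul_zero]
    · by_cases hk1 : k = m - 1
      · rw [if_pos hk1, if_pos (by simp [Fin.ext_iff]; omega), mul_one]
      · rw [if_neg hk1, if_neg (by simp [Fin.ext_iff]; omega), mul_zero]
  -- generic extraction of equations
  have key3 : ∀ (k : Fin m) (A B C : ℤ) (jA jB jC : Fin m),
      (∀ j : Fin m, u j * b.repr (L * b j) k =
        (if j = jA then A else 0) + (if j = jB then B else 0) +
        (if j = jC then C else 0)) → A + B + C = 0 := by
    intro k A B C jA jB jC hpt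
    have h1 := hcoord k
    rw [Finset.sum_congr rfl (fun j _ => hpt j)] at h1
    simpa [Finset.sum_add_distrib] using h1
  -- equation (i): c * v - 2 * v = 0
  have eq_i : c * v + (-2) * v = 0 := by
    have := key3 ⟨m-1, hm1⟩ (c * v) ((-2) * v) 0 ⟨m-2, hm2⟩ ⟨m-1, hm1⟩ ⟨m-1, hm1⟩ ?_
    · linarith
    intro j
    rcases j with ⟨jv, hjv⟩
    by_cases hj1 : jv = m - 2
    · subst hj1
      rw [hM2]
      rw [if_pos rfl, if_neg (by simp [Fin.ext_iff]; omega),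
        if_neg (by simp [Fin.ext_iff]; omega)]
      ring
    · by_cases hj2 : jv = m - 1
      · subst hj2
        rw [hM3 (m-1) hm1, if_neg (by omega), if_pos rfl,
          if_neg (by simp [Fin.ext_iff]; omega), if_pos rfl, if_pos rfl]
        rw [← hv]; ring
      · rw [hM1 jv (m-1) hjv hm1 (by omega), if_neg (by omega),
          if_neg (by simp [Fin.ext_iff]; omega),
          if_neg (by simp [Fin.ext_iff]; omega),
          if_neg (by simp [Fin.ext_iff]; omega)]
        ring
  -- equation (ii): c * u 0 + v * 2^N = 0
  have eq_ii : c * u ⟨0, h0m⟩ + v * (2:ℤ)^N = 0 := by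
    have := key3 ⟨0, h0m⟩ (c * u ⟨0, h0m⟩) (v * (2:ℤ)^N) 0
      ⟨m-2, hm2⟩ ⟨m-1, hm1⟩ ⟨m-1, hm1⟩ ?_
    · linarith
    intro j
    rcases j with ⟨jv, hjv⟩
    by_cases hj1 : jv = m - 2
    · subst hj1
      rw [hM2]
      rw [if_pos rfl, if_neg (by simp [Fin.ext_iff]; omega),
        if_neg (by simp [Fin.ext_iff]; omega)]
      rw [← hc]; ring
    · by_cases hj2 : jv = m - 1
      · subst hj2
        rw [hM3 0 h0m, if_pos rfl, if_neg (by omega),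
          if_neg (by simp [Fin.ext_iff]; omega), if_pos rfl, if_pos rfl]
        rw [← hv]; ring
      · rw [hM1 jv 0 hjv h0m (by omega), if_neg (by omega),
          if_neg (by simp [Fin.ext_iff]; omega),
          if_neg (by simp [Fin.ext_iff]; omega),
          if_neg (by simp [Fin.ext_iff]; omega)]
        ring
  -- ℕ-indexed coordinates
  set u' : ℕ → ℤ := fun k => if h : k < m then u ⟨k, h⟩ else 0 with hu'
  have hu'eq : ∀ (k : ℕ) (hk : k < m), u' k = u ⟨k, hk⟩ := by
    intro k hk
    rw [hu']
    exact dif_pos hk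
  have hc' : c = u' (m-2) := by rw [hu'eq (m-2) hm2]
  -- equation (iii): for 1 ≤ k ≤ m-2, u' (k-1) + c * u' k = 0
  have eq_iii : ∀ (k : ℕ), 1 ≤ k → k ≤ m - 2 →
      u' (k-1) + c * u' k = 0 := by
    intro k hk1 hk2
    rw [hu'eq (k-1) (by omega), hu'eq k (by omega)]
    have := key3 ⟨k, by omega⟩ (u ⟨k-1, by omega⟩) (c * u ⟨k, by omega⟩) 0
      ⟨k-1, by omega⟩ ⟨m-2, hm2⟩ ⟨m-1, hm1⟩ ?_
    · linarith
    intro j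
    rcases j with ⟨jv, hjv⟩
    by_cases hj1 : jv = m - 2
    · subst hj1
      rw [hM2]
      rw [if_neg (by simp [Fin.ext_iff]; omega), if_pos rfl,
        if_neg (by simp [Fin.ext_iff]; omega)]
      rw [← hc]; ring
    · by_cases hj2 : jv = m - 1
      · subst hj2
        rw [hM3 k (by omega), if_neg (by omega), if_neg (by omega),
          if_neg (by simp [Fin.ext_iff]; omega),
          if_neg (by simp [Fin.ext_iff]; omega), if_pos rfl]
        ring
      · have hjlt : jv < m - 2 := by omega
        rw [hM1 jv k hjv (by omega) hjlt]
        by_cases hjk : jv = k - 1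
        · subst hjk
          rw [if_pos (by omega), if_pos (by simp [Fin.ext_iff]),
            if_neg (by simp [Fin.ext_iff]; omega),
            if_neg (by simp [Fin.ext_iff]; omega)]
          ring
        · rw [if_neg (by omega), if_neg (by simp [Fin.ext_iff]; omega),
            if_neg (by simp [Fin.ext_iff]; omega),
            if_neg (by simp [Fin.ext_iff]; omega)]
          ring
  -- the recursion
  have urec : ∀ t, t ≤ m - 2 → u' (m-2-t) = (-1)^t * c^(t+1) := by
    intro t
    induction t with
    | zero => intro _; simpa using hc'.symm
    | succ n ih =>
      intro hn
      have hrec := eq_iii (m-2-n) (by omega) (by omega)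
      have ihn := ih (by omega)
      rw [show m - 2 - (n+1) = m - 2 - n - 1 from by omega]
      linear_combination hrec - c * ihn
  -- c = 0 or c = 2
  have hcase : c = 0 ∨ c = 2 := by
    have hvc : v * (c - 2) = 0 := by linarith [eq_i, mul_comm c v]
    rcases mul_eq_zero.mp hvc with hv0 | hc2
    · left
      have hu0 : u' 0 = c ^ (m-1) := by
        have h1 := urec (m-2) le_rfl
        rw [show m - 2 - (m-2) = 0 from by omega] at h1
        rw [h1]
        have heven : Even (m - 2) := by
          rw [Nat.even_sub (by omega)]
          simp [hme]
        rw [heven.neg_one_pow, one_mul]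
        congr 1
        omega
      have hcm : c ^ m = 0 := by
        have h2 : c * c ^ (m-1) = 0 := by
          have h3 := eq_ii
          rw [hv0, ← hu'eq 0 h0m, hu0] at h3
          linarith
        calc c ^ m = c * c ^ (m-1) := by
              rw [← pow_succ']
              congr 1
              omega
          _ = 0 := h2
      exact pow_eq_zero_iff (by omega) |>.mp hcm
    · right; linarith
  -- the key divisibility for every term
  set e : Fin m → ℤ := fun j => if (j:ℕ) = m-1 then 0 else (-2)^(j:ℕ) with he
  have heZ : ∀ (k : ℕ) (hk : k < m), k ≠ m-1 → e ⟨k, hk⟩ = (-2:ℤ)^k := by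
    intro k hk hkne
    rw [he]
    exact if_neg hkne
  have termdvd : ∀ j : Fin m, (2:ℤ)^N ∣ u j * e j := by
    intro j
    by_cases hj : (j:ℕ) = m - 1
    · rw [he]; simp [hj]
    · have hjle : (j:ℕ) ≤ m - 2 := by omega
      set t : ℕ := m - 2 - (j:ℕ) with ht
      have hju : u j = (-1)^t * c^(t+1) := by
        have h1 := urec t (by omega)
        rw [show m - 2 - t = (j:ℕ) from by omega] at h1
        rw [hu'eq (j:ℕ) j.isLt] at h1
        simpa using h1
      have hej : e j = (-2)^(j:ℕ) := by
        have := heZ (j:ℕ) j.isLt hj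
        simpa using this
      rcases hcase with hc0 | hc2
      · rw [hju, hc0]
        simp
      · rw [hju, hc2, hej]
        have hpow : (-1:ℤ)^t * 2^(t+1) * (-2)^(j:ℕ) =
            (-1)^(t + (j:ℕ)) * 2^(t + 1 + (j:ℕ)) := by
          rw [neg_pow (2:ℤ) (j:ℕ), pow_add, pow_add, pow_add]
          ring
        rw [hpow]
        rw [show t + 1 + (j:ℕ) = m - 1 from by omega]
        exact Dvd.dvd.mul_left (pow_dvd_pow 2 (by omega)) _
  -- the linear functional
  haveI : NeZero (2^N) := ⟨pow_ne_zero _ two_ne_zero⟩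
  set e' : Fin m → ZMod (2^N) := fun j => ((e j : ℤ) : ZMod (2^N)) with he'
  set φ : R →ₗ[ℤ] ZMod (2^N) := (b.constr ℤ) e' with hφ
  have hφb : ∀ j : Fin m, φ (b j) = e' j := fun j => b.constr_basis ℤ e' j
  have hcast0 : ∀ z : ℤ, (2:ℤ)^N ∣ z → ((z : ZMod (2^N)) = 0) := by
    intro z hz
    rw [ZMod.intCast_zmod_eq_zero_iff_dvd]
    push_cast
    exact hz
  have hsmulcast : ∀ (z y : ℤ), z • ((y : ZMod (2^N))) = ((z * y : ℤ) : ZMod (2^N)) := by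
    intro z y
    rw [zsmul_eq_mul]
    push_cast
    ring
  have he'cast : ∀ j : Fin m, e' j = ((e j : ℤ) : ZMod (2^N)) := fun j => rfl
  -- φ kills (2+L) * b i for every i
  have hφmul : ∀ i : Fin m, φ ((2 + L) * b i) = 0 := by
    intro i
    rcases i with ⟨iv, hiv⟩
    by_cases hi1 : iv = m - 1
    · subst hi1
      have hexp : (2 + L) * b ⟨m-1, hm1⟩ = ((2:ℤ)^N) • b ⟨0, h0m⟩ := by
        rw [hbX, hX, hb0, zsmul_eq_mul]
        push_cast
        ring
      rw [hexp, map_smul, hφb, he'cast, hsmulcast]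
      exact hcast0 _ (Dvd.dvd.mul_right dvd_rfl _)
    · by_cases hi2 : iv = m - 2
      · subst hi2
        have hexp : (2 + L) * b ⟨m-2, hm2⟩ =
            (2:ℤ) • b ⟨m-2, hm2⟩ + ∑ j : Fin m, u j • b j := by
          rw [← hrep, hbL (m-2) hm2 (by omega), zsmul_eq_mul]
          push_cast
          rw [add_mul]
          congr 1
          rw [← pow_succ']
          congr 1
          omega
        rw [hexp, map_add, map_smul, map_sum, hφb]
        have hsum : ∑ j : Fin m, φ (u j • b j) =
            ((∑ j : Fin m, u j * e j : ℤ) : ZMod (2^N)) := by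
          rw [Int.cast_sum]
          refine Finset.sum_congr rfl fun j _ => ?_
          rw [map_smul, hφb, he'cast, hsmulcast]
        rw [hsum, he'cast, hsmulcast, ← Int.cast_add]
        apply hcast0
        apply dvd_add
        · rw [heZ (m-2) hm2 (by omega)]
          have hevm2 : Even (m - 2) := by
            rw [Nat.even_sub (by omega)]
            simp [hme]
          rw [hevm2.neg_pow]
          have h2m : (2:ℤ) * 2^(m-2) = 2^(m-1) := by
            rw [← pow_succ']
            congr 1
            omega
          rw [h2m]
          exact pow_dvd_pow 2 (by omega)
        · exact Finset.dvd_sum fun j _ => termdvd j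
      · have hilt : iv < m - 2 := by omega
        have hexp : (2 + L) * b ⟨iv, hiv⟩ =
            (2:ℤ) • b ⟨iv, hiv⟩ + b ⟨iv+1, by omega⟩ := by
          rw [hbL iv hiv (by omega), hbL (iv+1) (by omega) (by omega),
            zsmul_eq_mul]
          push_cast
          rw [pow_succ']
          ring
        rw [hexp, map_add, map_smul, hφb, hφb, he'cast, he'cast, hsmulcast,
          ← Int.cast_add]
        apply hcast0
        rw [heZ iv hiv (by omega), heZ (iv+1) (by omega) (by omega)]
        have hz : (2 * (-2:ℤ)^iv + (-2:ℤ)^(iv+1) : ℤ) = 0 := by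
          rw [pow_succ]
          ring
        rw [hz]
        exact dvd_zero _
  -- conclude
  have hlrep : (l : R) = ∑ i : Fin m, b.repr w i • ((2 + L) * b i) := by
    rw [← hw]
    conv_lhs => rw [← b.sum_repr w]
    rw [Finset.mul_sum]
    exact Finset.sum_congr rfl fun i _ => mul_smul_comm _ _ _
  have hφl : φ ((l : R)) = 0 := by
    rw [hlrep, map_sum]
    refine Finset.sum_eq_zero fun i _ => ?_
    rw [map_smul, hφmul i, smul_zero]
  have hl1 : (l : R) = l • b ⟨0, h0m⟩ := by rw [hb0, zsmul_eq_mul, mul_one]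
  rw [hl1, map_smul, hφb, he'cast, hsmulcast] at hφl
  have he0 : e ⟨0, h0m⟩ = 1 := by
    rw [heZ 0 h0m (by omega)]
    exact pow_zero _
  rw [he0, mul_one] at hφl
  have hdvd : ((2^N : ℕ) : ℤ) ∣ l := (ZMod.intCast_zmod_eq_zero_iff_dvd l (2^N)).mp hφl
  push_cast at hdvd
  exact hdvd
end
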